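/- arXiv:1311.2671 — 6 statements merged into one kernel-verified Lean document; each statement's English description precedes it below -/
import Mathlib

section
/- Let n, k, s·n be positive integers with k/n < s < 1. For any set E of k-subsets of [n], if there exist nonnegative reals α_1, …, α_{sn-1} with Σ_j α_j = 1 such that every e ∈ E satisfies Σ_{j=1}^{sn-1} α_j·𝟙_e(j) > k/(sn), then the hypergraph ([n], E) has no fractional matching of cardinality s. -/
open Finset

def isFracMatching (n k : ℕ) (E : Finset (Finset ℕ)) (s : ℝ) : Prop :=
  ∃ α : Finset ℕ → ℝ, (∀ f, 0 ≤ α f) ∧ (∑ f ∈ E, α f) = s ∧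
    ∀ j ∈ Finset.Icc 1 n, 0 ≤ (∑ f ∈ E, α f * (if j ∈ f then 1 else 0)) ∧
      (∑ f ∈ E, α f * (if j ∈ f then 1 else 0)) ≤ (k : ℝ) / n

/-- If there are nonnegative weights `α_1,…,α_{sn-1}` summing to `1` with
`∑_j α_j 𝟙_e(j) > k/(sn)` for every edge `e`, then the hypergraph has no fractional
matching of cardinality `s`. -/
theorem stmt2 (n k m : ℕ) (s : ℝ) (hn : 0 < n) (hk : 0 < k) (hm : 0 < m)
    (hsn : (m : ℝ) = s * n) (hs1 : (k : ℝ) / n < s) (hs2 : s < 1)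
    (E : Finset (Finset ℕ)) (hE : ∀ f ∈ E, f ⊆ Finset.Icc 1 n ∧ f.card = k)
    (α : ℕ → ℝ) (hα0 : ∀ j, 0 ≤ α j) (hα1 : ∑ j ∈ Finset.Icc 1 (m - 1), α j = 1)
    (hsep : ∀ e ∈ E,
      (k : ℝ) / (s * n) < ∑ j ∈ Finset.Icc 1 (m - 1), α j * (if j ∈ e then 1 else 0)) :
    ¬ isFracMatching n k E s := by
  rintro ⟨β, hβ0, hβs, hβb⟩
  have hn' : (0:ℝ) < n := by exact_mod_cast hn
  have hk' : (0:ℝ) < k := by exact_mod_cast hk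
  have hkn : (0:ℝ) < k / n := div_pos hk' hn'
  have hs0 : 0 < s := hkn.trans hs1
  have hmn : m < n := by
    have : (m:ℝ) < n := by rw [hsn]; nlinarith
    exact_mod_cast this
  have hsub : Finset.Icc 1 (m-1) ⊆ Finset.Icc 1 n :=
    Finset.Icc_subset_Icc_right (by omega)
  have hex : ∃ e ∈ E, 0 < β e := by
    by_contra h
    push_neg at h
    have : ∑ f ∈ E, β f = 0 :=
      Finset.sum_eq_zero (fun f hf => le_antisymm (h f hf) (hβ0 f))
    rw [hβs] at this; linarith
  obtain ⟨e0, he0, hβe0⟩ := hex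
  have key : ∀ e ∈ E, β e * ((k:ℝ)/(s*n)) ≤
      β e * ∑ j ∈ Finset.Icc 1 (m-1), α j * (if j ∈ e then 1 else 0) :=
    fun e he => mul_le_mul_of_nonneg_left (le_of_lt (hsep e he)) (hβ0 e)
  have lower : (k:ℝ)/n <
      ∑ e ∈ E, β e * ∑ j ∈ Finset.Icc 1 (m-1), α j * (if j ∈ e then 1 else 0) := by
    have h1 : ∑ e ∈ E, β e * ((k:ℝ)/(s*n)) <
        ∑ e ∈ E, β e * ∑ j ∈ Finset.Icc 1 (m-1), α j * (if j ∈ e then 1 else 0) := by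
      apply Finset.sum_lt_sum key
      exact ⟨e0, he0, mul_lt_mul_of_pos_left (hsep e0 he0) hβe0⟩
    have h2 : ∑ e ∈ E, β e * ((k:ℝ)/(s*n)) = (k:ℝ)/n := by
      rw [← Finset.sum_mul, hβs]
      field_simp
    linarith
  have swap : ∑ e ∈ E, β e * ∑ j ∈ Finset.Icc 1 (m-1), α j * (if j ∈ e then 1 else 0)
      = ∑ j ∈ Finset.Icc 1 (m-1), α j * ∑ f ∈ E, β f * (if j ∈ f then 1 else 0) := by
    simp_rw [Finset.mul_sum]
    rw [Finset.sum_comm]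
    apply Finset.sum_congr rfl
    intro j _
    apply Finset.sum_congr rfl
    intro e _
    ring
  have upper : ∑ j ∈ Finset.Icc 1 (m-1), α j * ∑ f ∈ E, β f * (if j ∈ f then 1 else 0)
      ≤ (k:ℝ)/n := by
    calc ∑ j ∈ Finset.Icc 1 (m-1), α j * ∑ f ∈ E, β f * (if j ∈ f then 1 else 0)
        ≤ ∑ j ∈ Finset.Icc 1 (m-1), α j * ((k:ℝ)/n) := by
          apply Finset.sum_le_sum
          intro j hj
          exact mul_le_mul_of_nonneg_left ((hβb j (hsub hj)).2) (hα0 j)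
      _ = (k:ℝ)/n := by rw [← Finset.sum_mul, hα1, one_mul]
  rw [swap] at lower
  linarith
end

section
/- Let n, k be positive integers with k < n, let s ∈ (k/n, 1) with sn an integer, and let 1 ≤ c ≤ sn − 1. Then the hypergraph with edge set E_c = {e ∈ binom([n],k) : |e ∩ [c]| > kc/(sn)} has no fractional matching of cardinality s. -/
open Finset

/-- The hypergraph `E_c = {e ∈ binom([n],k) : |e ∩ [c]| > kc/(sn)}` has no
fractional matching of cardinality `s`. -/
theorem stmt4 (n k m c : ℕ) (s : ℝ) (hn : 0 < n) (hk : 0 < k) (hkn : k < n)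
    (hsn : (m : ℝ) = s * n) (hs1 : (k : ℝ) / n < s) (hs2 : s < 1)
    (hc1 : 1 ≤ c) (hc2 : c ≤ m - 1) :
    ¬ isFracMatching n k
      (((Finset.Icc 1 n).powersetCard k).filter
        (fun e => ((k * c : ℕ) : ℝ) / (s * n) < ((e ∩ Finset.Icc 1 c).card : ℝ))) s := by
  rintro ⟨α, h0, hsum, hcoord⟩
  set E := ((Finset.Icc 1 n).powersetCard k).filter
      (fun e => ((k * c : ℕ) : ℝ) / (s * n) < ((e ∩ Finset.Icc 1 c).card : ℝ)) with hE
  have hn0 : (0:ℝ) < n := by exact_mod_cast hn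
  have hs0 : 0 < s := lt_trans (by positivity) hs1
  have hsn0 : 0 < s * n := by positivity
  have hr0 : (0:ℝ) ≤ ((k*c : ℕ):ℝ) / (s*n) := by positivity
  have hcn : c ≤ n := by
    have h1 : (m:ℝ) < n := by rw [hsn]; nlinarith
    have hm : m < n := by exact_mod_cast h1
    omega
  set t : ℕ := ⌊((k*c : ℕ):ℝ) / (s*n)⌋₊ + 1 with ht
  have key : ∀ e ∈ E, (t:ℝ) ≤ ((e ∩ Finset.Icc 1 c).card : ℝ) := by
    intro e he
    rw [hE, Finset.mem_filter] at he
    have hfl : ⌊((k*c:ℕ):ℝ)/(s*n)⌋₊ < (e ∩ Finset.Icc 1 c).card :=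
      (Nat.floor_lt hr0).2 he.2
    exact_mod_cast hfl
  have swap : (∑ j ∈ Finset.Icc 1 c, ∑ e ∈ E, α e * (if j ∈ e then (1:ℝ) else 0))
      = ∑ e ∈ E, α e * ((e ∩ Finset.Icc 1 c).card : ℝ) := by
    rw [Finset.sum_comm]
    refine Finset.sum_congr rfl fun e _ => ?_
    rw [← Finset.mul_sum]
    congr 1
    rw [Finset.sum_boole, Finset.filter_mem_eq_inter, Finset.inter_comm]
  have low : (t:ℝ) * s ≤ ∑ j ∈ Finset.Icc 1 c, ∑ e ∈ E, α e * (if j ∈ e then (1:ℝ) else 0) := by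
    rw [swap]
    calc (t:ℝ) * s = ∑ e ∈ E, α e * (t:ℝ) := by
          rw [← Finset.sum_mul, hsum]; ring
      _ ≤ ∑ e ∈ E, α e * ((e ∩ Finset.Icc 1 c).card : ℝ) := by
          refine Finset.sum_le_sum fun e he => ?_
          exact mul_le_mul_of_nonneg_left (key e he) (h0 e)
  have upp : (∑ j ∈ Finset.Icc 1 c, ∑ e ∈ E, α e * (if j ∈ e then (1:ℝ) else 0))
      ≤ (c:ℝ) * ((k:ℝ)/n) := by
    have : ∀ j ∈ Finset.Icc 1 c, (∑ e ∈ E, α e * (if j ∈ e then (1:ℝ) else 0)) ≤ (k:ℝ)/n := by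
      intro j hj
      rw [Finset.mem_Icc] at hj
      exact (hcoord j (Finset.mem_Icc.2 ⟨hj.1, le_trans hj.2 hcn⟩)).2
    calc _ ≤ ∑ _j ∈ Finset.Icc 1 c, (k:ℝ)/n := Finset.sum_le_sum this
      _ = (c:ℝ) * ((k:ℝ)/n) := by
          rw [Finset.sum_const, Nat.card_Icc]; simp [nsmul_eq_mul]
  have hrt : ((k*c:ℕ):ℝ)/(s*n) < (t:ℝ) := by
    have := Nat.lt_floor_add_one (((k*c:ℕ):ℝ)/(s*n))
    push_cast [ht]
    push_cast at this
    linarith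
  have hrs : ((k*c:ℕ):ℝ)/(s*n) * s = (c:ℝ) * ((k:ℝ)/n) := by
    push_cast
    field_simp
  have : (c:ℝ) * ((k:ℝ)/n) < (t:ℝ) * s := by
    rw [← hrs]
    exact mul_lt_mul_of_pos_right hrt hs0
  linarith
end

section
/- For fixed n and k with k < n, the function s ↦ max_{1 ≤ c ≤ sn−1} Σ_{i > kc/(sn)} C(c,i)·C(n−c,k−i) is nondecreasing in s over values s ∈ (k/n, 1) with sn an integer. Equivalently, for integers m < m' in (k, n), max_{1 ≤ c ≤ m−1} Σ_{i > kc/m} C(c,i)·C(n−c,k−i) ≤ max_{1 ≤ c ≤ m'−1} Σ_{i > kc/m'} C(c,i)·C(n−c,k−i). -/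
open Finset

/-- Monotonicity of the extremal formula: for integers `k < m < m' < n`,
`max_{1 ≤ c ≤ m−1} ∑_{i > kc/m} C(c,i)C(n−c,k−i) ≤
 max_{1 ≤ c ≤ m'−1} ∑_{i > kc/m'} C(c,i)C(n−c,k−i)`. -/
theorem stmt6 (n k m m' : ℕ) (hkn : k < n) (hk : 0 < k)
    (hkm : k < m) (hmm' : m < m') (hm'n : m' < n) :
    ((Finset.Icc 1 (m - 1)).sup fun c =>
        ∑ i ∈ (Finset.range (k + 1)).filter
            (fun i : ℕ => ((k * c : ℕ) : ℝ) / (m : ℝ) < (i : ℝ)),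
          c.choose i * (n - c).choose (k - i)) ≤
      ((Finset.Icc 1 (m' - 1)).sup fun c =>
        ∑ i ∈ (Finset.range (k + 1)).filter
            (fun i : ℕ => ((k * c : ℕ) : ℝ) / (m' : ℝ) < (i : ℝ)),
          c.choose i * (n - c).choose (k - i)) := by
  apply Finset.sup_le
  intro c hc
  have hc' : c ∈ Finset.Icc 1 (m' - 1) := by
    simp only [Finset.mem_Icc] at hc ⊢; omega
  refine le_trans ?_ (Finset.le_sup hc')
  apply Finset.sum_le_sum_of_subset
  apply Finset.monotone_filter_right
  intro i _ hi
  refine lt_of_le_of_lt ?_ hi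
  have hm : (0:ℝ) < m := by
    have : 0 < m := by omega
    exact_mod_cast this
  gcongr
end

section
/- Let m = sn be a positive integer with 1 ≤ m ≤ n. For j ∈ [m−1] define z_j ∈ ℝ^n by (z_j)_i = m − j if i ≤ j and (z_j)_i = −j if i > j. Then the vectors z_1, …, z_{m−1} are linearly independent, and every vector ω ∈ ℝ^n with ω_1 ≥ ω_2 ≥ … ≥ ω_n, Σ_{i=1}^m ω_i = 0, and ω_i = ω_m for all i > m is a linear combination Σ_j y_j z_j with all y_j ≥ 0. -/
open Finset

/-- The basis vectors `z_j` with `j` coordinates `m−j` followed by `−j`'s. -/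
def zvec (n m j : ℕ) : Fin n → ℝ := fun i => if (i : ℕ) + 1 ≤ j then (m : ℝ) - j else -(j : ℝ)

lemma zvec_diff (n m j : ℕ) (a b : Fin n) (hab : (a : ℕ) + 1 = (b : ℕ)) :
    zvec n m j a - zvec n m j b = if j = (a : ℕ) + 1 then (m : ℝ) else 0 := by
  unfold zvec
  rcases lt_trichotomy j ((a:ℕ)+1) with h | h | h
  · rw [if_neg (by omega), if_neg (by omega), if_neg (by omega)]; ring
  · rw [if_pos (by omega), if_neg (by omega), if_pos (by omega)]; push_cast [h]; ring
  · rw [if_pos (by omega), if_pos (by omega), if_neg (by omega)]; ring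

lemma zvec_sum (n m j : ℕ) (hj : j ≤ m) (hmn : m ≤ n) :
    ∑ i ∈ Finset.univ.filter (fun i : Fin n => (i : ℕ) + 1 ≤ m), zvec n m j i = 0 := by
  have h1 : ∑ i ∈ Finset.univ.filter (fun i : Fin n => (i : ℕ) + 1 ≤ m), zvec n m j i
      = ∑ i ∈ Finset.range n, (if i + 1 ≤ m then (if i + 1 ≤ j then (m : ℝ) - j else -(j:ℝ)) else 0) := by
    rw [Finset.sum_filter, ← Fin.sum_univ_eq_sum_range (fun i => if i + 1 ≤ m then (if i + 1 ≤ j then (m : ℝ) - j else -(j:ℝ)) else 0)]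
    rfl
  rw [h1]
  rw [← Finset.sum_subset (Finset.range_subset_range.mpr hmn)
    (by intro x _ hx; rw [Finset.mem_range] at hx; rw [if_neg (by omega)])]
  have h2 : ∀ i ∈ Finset.range m, (if i + 1 ≤ m then (if i + 1 ≤ j then (m : ℝ) - j else -(j:ℝ)) else 0)
      = (if i + 1 ≤ j then (m : ℝ) - j else -(j:ℝ)) := by
    intro i hi; rw [Finset.mem_range] at hi; rw [if_pos (by omega)]
  rw [Finset.sum_congr rfl h2]
  rw [Finset.range_eq_Ico, ← Finset.sum_Ico_consecutive _ (Nat.zero_le j) hj]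
  rw [Finset.sum_congr rfl (fun i hi => if_pos (by rw [Finset.mem_Ico] at hi; omega)),
      Finset.sum_congr rfl (g := fun _ => -(j:ℝ)) (fun i hi => if_neg (by rw [Finset.mem_Ico] at hi; omega))]
  simp [Nat.card_Ico]
  push_cast [hj]
  ring

/-- The vectors `z_1,…,z_{m−1}` are linearly independent, and every nonincreasing
`ω ∈ ℝ^n` with `∑_{i=1}^m ω_i = 0` and constant tail `ω_i = ω_m` for `i > m` is a
nonnegative linear combination of them. -/
theorem stmt8 (n m : ℕ) (hm : 0 < m) (hmn : m ≤ n) :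
    (LinearIndependent ℝ (fun j : Fin (m - 1) => zvec n m ((j : ℕ) + 1))) ∧
    ∀ ω : Fin n → ℝ,
      (∀ i i' : Fin n, i ≤ i' → ω i' ≤ ω i) →
      (∑ i ∈ Finset.univ.filter (fun i : Fin n => (i : ℕ) + 1 ≤ m), ω i) = 0 →
      (∀ i i' : Fin n, m ≤ (i : ℕ) + 1 → m ≤ (i' : ℕ) + 1 → ω i = ω i') →
      ∃ y : ℕ → ℝ, (∀ j, 0 ≤ y j) ∧
        ω = ∑ j ∈ Finset.Icc 1 (m - 1), y j • zvec n m j := by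
  constructor
  · -- linear independence
    rw [Fintype.linearIndependent_iff]
    intro g hg k
    have hk : (k : ℕ) + 1 < n := by omega
    set a : Fin n := ⟨(k : ℕ), by omega⟩ with ha
    set b : Fin n := ⟨(k : ℕ) + 1, by omega⟩ with hb
    have h1 := congrFun hg a
    have h2 := congrFun hg b
    simp only [Finset.sum_apply, Pi.smul_apply, smul_eq_mul, Pi.zero_apply] at h1 h2
    have h3 : ∑ j : Fin (m-1), g j * (zvec n m ((j:ℕ)+1) a - zvec n m ((j:ℕ)+1) b) = 0 := by
      rw [show (fun j : Fin (m-1) => g j * (zvec n m ((j:ℕ)+1) a - zvec n m ((j:ℕ)+1) b))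
          = fun j : Fin (m-1) => g j * zvec n m ((j:ℕ)+1) a - g j * zvec n m ((j:ℕ)+1) b from
        funext fun j => by ring]
      rw [Finset.sum_sub_distrib, h1, h2, sub_zero]
    have h4 : ∀ j : Fin (m-1), g j * (zvec n m ((j:ℕ)+1) a - zvec n m ((j:ℕ)+1) b)
        = if j = k then g j * m else 0 := by
      intro j
      rw [zvec_diff n m ((j:ℕ)+1) a b rfl]
      by_cases hjk : j = k
      · rw [if_pos (by subst hjk; rfl), if_pos hjk]
      · rw [if_neg (by simp only [ha]; intro hh; exact hjk (Fin.ext (by omega))), if_neg hjk]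
        ring
    rw [Finset.sum_congr rfl (fun j _ => h4 j), Finset.sum_ite_eq' _ k (fun j => g j * m),
        if_pos (Finset.mem_univ k)] at h3
    have : (m:ℝ) ≠ 0 := Nat.cast_ne_zero.mpr (by omega)
    exact (mul_eq_zero.mp h3).resolve_right this
  · -- conic representation
    intro ω hmono hsum htail
    have hmR : (0:ℝ) < m := by exact_mod_cast hm
    set y : ℕ → ℝ := fun j =>
      if h : 1 ≤ j ∧ j ≤ m - 1 then (ω ⟨j - 1, by omega⟩ - ω ⟨j, by omega⟩) / m else 0 with hy
    refine ⟨y, ?_, ?_⟩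
    · intro j
      simp only [hy]
      by_cases h : 1 ≤ j ∧ j ≤ m - 1
      · rw [dif_pos h]
        apply div_nonneg _ hmR.le
        rw [sub_nonneg]
        exact hmono _ _ (by simp only [Fin.mk_le_mk]; omega)
      · rw [dif_neg h]
    · -- main equality
      set R : Fin n → ℝ := fun i => ∑ j ∈ Finset.Icc 1 (m - 1), y j * zvec n m j i with hR
      have hRsum : (∑ j ∈ Finset.Icc 1 (m - 1), y j • zvec n m j) = R := by
        funext i
        rw [hR]
        simp [Finset.sum_apply]
      rw [hRsum]
      set h : Fin n → ℝ := fun i => ω i - R i with hh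
      -- consecutive differences of h vanish
      have hstep : ∀ k : ℕ, (hk : k + 1 < n) → h ⟨k + 1, hk⟩ = h ⟨k, by omega⟩ := by
        intro k hk
        set a : Fin n := ⟨k, by omega⟩
        set b : Fin n := ⟨k + 1, hk⟩
        have hdiff : R a - R b = ∑ j ∈ Finset.Icc 1 (m-1), y j * (zvec n m j a - zvec n m j b) := by
          rw [hR, ← Finset.sum_sub_distrib]
          exact Finset.sum_congr rfl fun j _ => by ring
        have hav : (a : ℕ) = k := rfl
        have hbv : (b : ℕ) = k + 1 := rfl
        by_cases hcase : k + 1 < m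
        · -- here k+1 ∈ Icc 1 (m-1)
          have hdiff2 : R a - R b = y (k+1) * m := by
            rw [hdiff, Finset.sum_congr rfl (fun j _ => by rw [zvec_diff n m j a b rfl])]
            simp only [hav, mul_ite, mul_zero]
            rw [Finset.sum_ite_eq' (Finset.Icc 1 (m-1)) (k+1) (fun j => y j * m)]
            rw [if_pos (by rw [Finset.mem_Icc]; omega)]
          have hys : y (k+1) * m = ω a - ω b := by
            simp only [hy]
            rw [dif_pos ⟨by omega, by omega⟩]
            field_simp
            rfl
          simp only [hh]
          have : R a - R b = ω a - ω b := by rw [hdiff2, hys]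
          linarith
        · -- tail: all zvec coordinates equal, ω equal
          have hω : ω a = ω b := htail a b (by rw [hav]; omega) (by rw [hbv]; omega)
          have hz : ∀ j ∈ Finset.Icc 1 (m-1), zvec n m j a - zvec n m j b = 0 := by
            intro j hj
            rw [Finset.mem_Icc] at hj
            rw [zvec_diff n m j a b rfl, if_neg (by omega)]
          have : R a - R b = 0 := by
            rw [hdiff, Finset.sum_congr rfl (fun j hj => by rw [hz j hj, mul_zero]), Finset.sum_const, smul_zero]
          simp only [hh]
          linarith
      -- h is constant
      have hconst : ∀ i : Fin n, h i = h ⟨0, by omega⟩ := by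
        intro i
        obtain ⟨k, hk⟩ := i
        induction k with
        | zero => rfl
        | succ k ih => rw [hstep k hk, ih (by omega)]
      -- sum of R over first m coordinates is 0
      have hRzero : ∑ i ∈ Finset.univ.filter (fun i : Fin n => (i : ℕ) + 1 ≤ m), R i = 0 := by
        simp only [hR]
        rw [Finset.sum_comm]
        refine Finset.sum_eq_zero fun j hj => ?_
        rw [← Finset.mul_sum, zvec_sum n m j (by rw [Finset.mem_Icc] at hj; omega) hmn, mul_zero]
      have hsumh : ∑ i ∈ Finset.univ.filter (fun i : Fin n => (i : ℕ) + 1 ≤ m), h i = 0 := by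
        simp only [hh]
        rw [Finset.sum_sub_distrib, hsum, hRzero, sub_zero]
      have hcard : (Finset.univ.filter (fun i : Fin n => (i : ℕ) + 1 ≤ m)).card = m := by
        have hr : (∑ i ∈ Finset.range n, if i + 1 ≤ m then 1 else 0) = m := by
          rw [← Finset.sum_subset (Finset.range_subset_range.mpr hmn)
            (by intro x _ hx; rw [Finset.mem_range] at hx; rw [if_neg (by omega)])]
          rw [Finset.sum_congr rfl (g := fun _ => 1)
            (fun i hi => if_pos (by rw [Finset.mem_range] at hi; omega))]
          simp
        rw [Finset.card_filter,
          Fin.sum_univ_eq_sum_range (fun i => if i + 1 ≤ m then 1 else 0), hr]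
      have h0 : h ⟨0, by omega⟩ = 0 := by
        have : ∑ i ∈ Finset.univ.filter (fun i : Fin n => (i : ℕ) + 1 ≤ m), h i
            = m * h ⟨0, by omega⟩ := by
          rw [Finset.sum_congr rfl (fun i _ => hconst i), Finset.sum_const, nsmul_eq_mul]
          congr 1
          exact_mod_cast hcard
        rw [hsumh] at this
        have hmne : (m:ℝ) ≠ 0 := by positivity
        exact (mul_eq_zero.mp this.symm).resolve_left hmne
      funext i
      have h1 : h i = 0 := by rw [hconst i, h0]
      simp only [hh] at h1
      linarith
end

section
/- Let n, k be positive integers with k < n and let s ∈ (k/n, 1). Then max_{1 ≤ c ≤ ⌊ns⌋−1} Σ_{i > kc/⌊ns⌋} C(c,i)·C(n−c,k−i) ≤ max_{1 ≤ c ≤ ⌈ns⌉−1} Σ_{i > kc/⌈ns⌉} C(c,i)·C(n−c,k−i), provided ⌊ns⌋ ≥ 2. -/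
open Finset

/-- Inequality (e67): the extremal formula at `⌊ns⌋` is at most the formula at `⌈ns⌉`. -/
theorem stmt14 (n k : ℕ) (hk : 0 < k) (hkn : k < n) (s : ℝ)
    (hs1 : (k : ℝ) / n < s) (hs2 : s < 1) (hfloor : 2 ≤ ⌊(n : ℝ) * s⌋₊) :
    ((Finset.Icc 1 (⌊(n : ℝ) * s⌋₊ - 1)).sup fun c =>
        ∑ i ∈ (Finset.range (k + 1)).filter
            (fun i : ℕ => ((k * c : ℕ) : ℝ) / (⌊(n : ℝ) * s⌋₊ : ℝ) < (i : ℝ)),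
          c.choose i * (n - c).choose (k - i)) ≤
      ((Finset.Icc 1 (⌈(n : ℝ) * s⌉₊ - 1)).sup fun c =>
        ∑ i ∈ (Finset.range (k + 1)).filter
            (fun i : ℕ => ((k * c : ℕ) : ℝ) / (⌈(n : ℝ) * s⌉₊ : ℝ) < (i : ℝ)),
          c.choose i * (n - c).choose (k - i)) := by
  have hfc : ⌊(n : ℝ) * s⌋₊ ≤ ⌈(n : ℝ) * s⌉₊ := Nat.floor_le_ceil _
  apply Finset.sup_le
  intro c hc
  have hc' : c ∈ Finset.Icc 1 (⌈(n : ℝ) * s⌉₊ - 1) := by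
    simp only [Finset.mem_Icc] at hc ⊢
    exact ⟨hc.1, le_trans hc.2 (by omega)⟩
  refine le_trans ?_ (Finset.le_sup hc')
  apply Finset.sum_le_sum_of_subset
  intro i hi
  simp only [Finset.mem_filter] at hi ⊢
  refine ⟨hi.1, lt_of_le_of_lt ?_ hi.2⟩
  apply div_le_div_of_nonneg_left (by positivity) (by positivity)
  exact_mod_cast hfc
end

section
/- Let n, k, m be positive integers with k < m < n, and let t = k/m. Suppose α ∈ ℝ^{m−1} with α_j ≥ 0 and Σ_j α_j = 1 maximizes N(α) = |{x ∈ binom([n],k) : Σ_{j=1}^{m−1} α_j 𝟙_x(j) > t}| over the simplex. Then there exists δ > 0 and a maximizer α* with N(α*) = N(α) such that |Σ_j α*_j 𝟙_x(j) − t| > δ for every x ∈ binom([n],k). -/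
open Finset

/-- The number of `k`-subsets `x` of `[n]` separated by the weights `α`:
`N(α) = |{x : ∑_j α_j 𝟙_x(j) > t}|`. -/
noncomputable def sepCount (n k m : ℕ) (t : ℝ) (α : ℕ → ℝ) : ℕ :=
  (((Finset.Icc 1 n).powersetCard k).filter
    (fun x => t < ∑ j ∈ Finset.Icc 1 (m - 1), α j * (if j ∈ x then 1 else 0))).card

/-- An extremal separating functional can be perturbed, without decreasing the count,
so that it strictly avoids the threshold `t = k/m` on every `k`-set. -/
theorem stmt16 (n k m : ℕ) (hk : 0 < k) (hkn : k < n) (hkm : k < m) (hmn : m < n)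
    (α : ℕ → ℝ) (hα0 : ∀ j, 0 ≤ α j) (hα1 : ∑ j ∈ Finset.Icc 1 (m - 1), α j = 1)
    (hmax : ∀ α' : ℕ → ℝ, (∀ j, 0 ≤ α' j) → (∑ j ∈ Finset.Icc 1 (m - 1), α' j = 1) →
      sepCount n k m ((k : ℝ) / m) α' ≤ sepCount n k m ((k : ℝ) / m) α) :
    ∃ δ : ℝ, 0 < δ ∧ ∃ α' : ℕ → ℝ, (∀ j, 0 ≤ α' j) ∧
      (∑ j ∈ Finset.Icc 1 (m - 1), α' j = 1) ∧
      sepCount n k m ((k : ℝ) / m) α' = sepCount n k m ((k : ℝ) / m) α ∧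
      ∀ x ∈ (Finset.Icc 1 n).powersetCard k,
        δ < |(∑ j ∈ Finset.Icc 1 (m - 1), α' j * (if j ∈ x then 1 else 0)) - (k : ℝ) / m| := by
  classical
  set t : ℝ := (k : ℝ) / m with ht
  set F : Finset (Finset ℕ) := (Finset.Icc 1 n).powersetCard k with hF
  set S : Finset ℕ → ℝ :=
    fun x => ∑ j ∈ Finset.Icc 1 (m - 1), α j * (if j ∈ x then 1 else 0) with hS
  set T : Finset ℕ → ℝ := fun x => if 1 ∈ x then 1 else 0 with hT
  have hm0 : (0:ℝ) < m := by exact_mod_cast hk.trans hkm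
  have ht0 : 0 < t := div_pos (by exact_mod_cast hk) hm0
  have ht1 : t < 1 := by
    rw [ht, div_lt_one hm0]; exact_mod_cast hkm
  have h1mem : (1:ℕ) ∈ Finset.Icc 1 (m - 1) := by
    simp only [Finset.mem_Icc]; omega
  have hS0 : ∀ x, 0 ≤ S x := by
    intro x
    apply Finset.sum_nonneg
    intro j _
    have := hα0 j
    split <;> simp <;> linarith
  have hS1 : ∀ x, S x ≤ 1 := by
    intro x
    rw [← hα1]
    apply Finset.sum_le_sum
    intro j _
    have := hα0 j
    split <;> simp <;> linarith
  have hT0 : ∀ x, 0 ≤ T x := by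
    intro x; rw [hT]; dsimp only; split <;> norm_num
  -- choose ε
  have hεb : ∃ ε : ℝ, 0 < ε ∧ ε ≤ 1 ∧ ∀ x ∈ F, t < S x → ε ≤ S x - t := by
    by_cases h : (F.filter (fun x => t < S x)).Nonempty
    · refine ⟨min 1 ((F.filter (fun x => t < S x)).inf' h (fun x => S x - t)), ?_,
        min_le_left _ _, ?_⟩
      · refine lt_min one_pos ?_
        rw [Finset.lt_inf'_iff]
        intro x hx
        have := (Finset.mem_filter.1 hx).2
        linarith
      · intro x hx hlt
        exact (min_le_right _ _).trans (Finset.inf'_le _ (Finset.mem_filter.2 ⟨hx, hlt⟩))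
    · exact ⟨1, one_pos, le_refl 1,
        fun x hx hlt => absurd ⟨x, Finset.mem_filter.2 ⟨hx, hlt⟩⟩ h⟩
  obtain ⟨ε, hε0, hε1, hεle⟩ := hεb
  -- bad values of s
  set bad : Finset ℝ := F.image (fun x => (t - S x) / (T x - S x)) with hbad
  obtain ⟨s, hs⟩ : ∃ s, s ∈ Set.Ioo (0:ℝ) ε \ ↑bad :=
    ((Set.Ioo_infinite hε0).diff (bad.finite_toSet)).nonempty
  have hs0 : 0 < s := hs.1.1
  have hsε : s < ε := hs.1.2
  have hs1 : s < 1 := lt_of_lt_of_le hsε hε1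
  have hsnb : s ∉ bad := by
    intro hmem
    exact hs.2 (by exact_mod_cast hmem)
  -- define perturbed weights
  set α' : ℕ → ℝ := fun j => (1 - s) * α j + s * (if j = 1 then 1 else 0) with hα'
  have indsum : ∑ j ∈ Finset.Icc 1 (m - 1), (if j = 1 then (1:ℝ) else 0) = 1 := by
    rw [Finset.sum_ite_eq' (Finset.Icc 1 (m-1)) 1 (fun _ => (1:ℝ))]
    simp [h1mem]
  have hα'0 : ∀ j, 0 ≤ α' j := by
    intro j
    rw [hα']
    have := hα0 j
    dsimp only
    split <;> nlinarith
  have hα'1 : ∑ j ∈ Finset.Icc 1 (m - 1), α' j = 1 := by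
    rw [hα']
    rw [Finset.sum_add_distrib, ← Finset.mul_sum, ← Finset.mul_sum, hα1, indsum]
    ring
  -- key computation
  have key : ∀ x : Finset ℕ,
      ∑ j ∈ Finset.Icc 1 (m - 1), α' j * (if j ∈ x then 1 else 0)
        = (1 - s) * S x + s * T x := by
    intro x
    have step : ∀ j ∈ Finset.Icc 1 (m-1),
        α' j * (if j ∈ x then (1:ℝ) else 0)
          = (1 - s) * (α j * (if j ∈ x then 1 else 0))
            + s * ((if j = 1 then (1:ℝ) else 0) * (if j ∈ x then 1 else 0)) := by
      intro j _; rw [hα']; ring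
    rw [Finset.sum_congr rfl step, Finset.sum_add_distrib, ← Finset.mul_sum, ← Finset.mul_sum]
    congr 1
    congr 1
    have : ∀ j ∈ Finset.Icc 1 (m-1),
        (if j = 1 then (1:ℝ) else 0) * (if j ∈ x then 1 else 0)
          = if j = 1 then (if j ∈ x then (1:ℝ) else 0) else 0 := by
      intro j _; split <;> simp
    rw [Finset.sum_congr rfl this,
      Finset.sum_ite_eq' (Finset.Icc 1 (m-1)) 1 (fun j => if j ∈ x then (1:ℝ) else 0)]
    simp [h1mem, hT]
  -- the perturbed functional avoids t on every x ∈ F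
  have avoid : ∀ x ∈ F, (1 - s) * S x + s * T x ≠ t := by
    intro x hx heq
    by_cases hc : T x = S x
    · have hSx : S x = t := by rw [hc] at heq; linarith [heq]
      have hTx : T x = t := by rw [hc, hSx]
      have hT01 : T x = 0 ∨ T x = 1 := by
        simp only [hT]
        split
        · exact Or.inr rfl
        · exact Or.inl rfl
      rcases hT01 with h | h <;> rw [h] at hTx <;> linarith
    · have hne : T x - S x ≠ 0 := sub_ne_zero.2 hc
      have : s = (t - S x) / (T x - S x) := by
        rw [eq_div_iff hne]; linarith [heq]
      exact hsnb (Finset.mem_image.2 ⟨x, hx, this.symm⟩)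
  -- monotonicity: every x counted by α is counted by α'
  have hsub : F.filter (fun x => t < S x) ⊆
      F.filter (fun x => t < (1 - s) * S x + s * T x) := by
    intro x hx
    rw [Finset.mem_filter] at hx ⊢
    refine ⟨hx.1, ?_⟩
    have h1 : ε ≤ S x - t := hεle x hx.1 hx.2
    have h2 : s * (S x - T x) ≤ s := by
      have : S x - T x ≤ 1 := by have := hT0 x; have := hS1 x; linarith
      nlinarith
    nlinarith
  -- sepCount expressions
  have hsepα : sepCount n k m t α = (F.filter (fun x => t < S x)).card := rfl
  have hsepα' : sepCount n k m t α'
      = (F.filter (fun x => t < (1 - s) * S x + s * T x)).card := by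
    unfold sepCount
    congr 1
    apply Finset.filter_congr
    intro x _
    rw [key x]
  have hcount : sepCount n k m t α' = sepCount n k m t α := by
    refine le_antisymm (hmax α' hα'0 hα'1) ?_
    rw [hsepα, hsepα']
    exact Finset.card_le_card hsub
  -- F is nonempty
  have hFne : F.Nonempty := by
    obtain ⟨x0, hx0sub, hx0card⟩ := Finset.exists_subset_card_eq (s := Finset.Icc 1 n) (n := k)
      (by rw [Nat.card_Icc]; omega)
    exact ⟨x0, Finset.mem_powersetCard.2 ⟨hx0sub, hx0card⟩⟩
  -- choose δ
  set H : Finset ℝ := F.image (fun x => |(1 - s) * S x + s * T x - t|) with hH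
  have hHne : H.Nonempty := hFne.image _
  refine ⟨H.min' hHne / 2, ?_, α', hα'0, hα'1, hcount, ?_⟩
  · have hmem := H.min'_mem hHne
    obtain ⟨x, hxF, hxe⟩ := Finset.mem_image.1 hmem
    have hpos : (0:ℝ) < |(1 - s) * S x + s * T x - t| :=
      abs_pos.2 (sub_ne_zero.2 (avoid x hxF))
    have h2 : H.min' hHne = |(1 - s) * S x + s * T x - t| := hxe.symm
    linarith [h2, hpos]
  · intro x hx
    rw [key x]
    have hle : H.min' hHne ≤ |(1 - s) * S x + s * T x - t| :=
      Finset.min'_le _ _ (Finset.mem_image.2 ⟨x, hx, rfl⟩)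
    have hpos : (0:ℝ) < |(1 - s) * S x + s * T x - t| :=
      abs_pos.2 (sub_ne_zero.2 (avoid x hx))
    linarith
end
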